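/- Define the total detection error probability P_total(Γ) = P_f(Γ) + P_m(Γ) where P_f(Γ) = P(Δ₁ + σ² ≥ Γ), P_m(Γ) = P(Δ₂ + σ² ≤ Γ), σ² is log-uniform on [x̌, x̂], and x̌ + Δ₂ ≤ x̂ + Δ₁. Then on the interval [x̌ + Δ₂, x̂ + Δ₁], P_total(Γ) = (1/(2 ln ϱ)) ln(ϱ² − ϱ²(Δ₂ − Δ₁)/(Γ − Δ₁)), which is monotonically increasing in Γ. -/

import Mathlib

open MeasureTheory Set

lemma lint_aux {L c d : ℝ} (hL : 0 < L) (hc : 0 < c) (hcd : c ≤ d) :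
    ∫⁻ x in Icc c d, ENNReal.ofReal (1 / (2 * x * L))
      = ENNReal.ofReal ((Real.log d - Real.log c) / (2 * L)) := by
  have hd : 0 < d := hc.trans_le hcd
  have hcont : ContinuousOn (fun x : ℝ => 1 / (2 * x * L)) (Icc c d) := by
    apply continuousOn_const.div
    · fun_prop
    · intro x hx
      have : 0 < x := lt_of_lt_of_le hc hx.1
      positivity
  have hint : IntegrableOn (fun x : ℝ => 1 / (2 * x * L)) (Ioc c d) :=
    (hcont.integrableOn_Icc).mono_set Ioc_subset_Icc_self
  rw [← setLIntegral_congr Ioc_ae_eq_Icc,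
    ← ofReal_integral_eq_lintegral_ofReal hint ?_]
  · congr 1
    rw [← intervalIntegral.integral_of_le hcd]
    have : ∀ x : ℝ, 1 / (2 * x * L) = (2 * L)⁻¹ * x⁻¹ := by
      intro x; field_simp
    simp_rw [this]
    rw [intervalIntegral.integral_const_mul, integral_inv_of_pos hc hd,
      Real.log_div hd.ne' hc.ne']
    ring
  · filter_upwards [ae_restrict_mem measurableSet_Ioc] with x hx
    have : 0 < x := hc.trans hx.1
    positivity

/-- Total detection error probability on [x̌+Δ₂, x̂+Δ₁]: closed form and monotonicity. -/
theorem stmt3 {Ω : Type*} [MeasureSpace Ω] (ℙ : Measure Ω) [IsProbabilityMeasure ℙ]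
    (σ2 : Ω → ℝ) (ϱ σt2 Δ₁ Δ₂ : ℝ) (hϱ : 1 < ϱ) (hσ : 0 < σt2)
    (hΔ1 : 0 ≤ Δ₁) (hΔ : Δ₁ < Δ₂)
    (hord : σt2 / ϱ + Δ₂ ≤ ϱ * σt2 + Δ₁)
    (hpdf : pdf σ2 ℙ volume =ᵐ[volume] fun x =>
      (Icc (σt2 / ϱ) (ϱ * σt2)).indicator
        (fun y => ENNReal.ofReal (1 / (2 * y * Real.log ϱ))) x) :
    (∀ Γ ∈ Icc (σt2 / ϱ + Δ₂) (ϱ * σt2 + Δ₁),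
        ℙ {ω | Δ₁ + σ2 ω ≥ Γ} + ℙ {ω | Δ₂ + σ2 ω ≤ Γ}
          = ENNReal.ofReal (1 / (2 * Real.log ϱ)
              * Real.log (ϱ ^ 2 - ϱ ^ 2 * (Δ₂ - Δ₁) / (Γ - Δ₁))))
    ∧ MonotoneOn (fun Γ => 1 / (2 * Real.log ϱ)
          * Real.log (ϱ ^ 2 - ϱ ^ 2 * (Δ₂ - Δ₁) / (Γ - Δ₁)))
        (Icc (σt2 / ϱ + Δ₂) (ϱ * σt2 + Δ₁)) := by
  have hϱ0 : (0:ℝ) < ϱ := lt_trans one_pos hϱ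
  set L := Real.log ϱ with hLdef
  have hL : 0 < L := Real.log_pos hϱ
  set a := σt2 / ϱ with hadef
  set b := ϱ * σt2 with hbdef
  have ha : 0 < a := div_pos hσ hϱ0
  have hb : 0 < b := mul_pos hϱ0 hσ
  have hab : a ≤ b := by
    rw [hadef, hbdef, div_le_iff₀ hϱ0]
    nlinarith
  have hlogba : Real.log b - Real.log a = 2 * L := by
    rw [hadef, hbdef, Real.log_mul hϱ0.ne' hσ.ne', Real.log_div hσ.ne' hϱ0.ne']
    ring
  set f : ℝ → ENNReal := fun x =>
    (Icc a b).indicator (fun y => ENNReal.ofReal (1 / (2 * y * L))) x with hfdef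
  have htot : ∫⁻ x, f x = 1 := by
    rw [hfdef, lintegral_indicator measurableSet_Icc, lint_aux hL ha hab, hlogba]
    rw [div_self (by positivity)]
    simp
  have haem : AEMeasurable σ2 ℙ := by
    by_contra haem
    have h0 : Measure.map σ2 ℙ = 0 := Measure.map_of_not_aemeasurable haem
    have hz : pdf σ2 ℙ volume =ᵐ[volume] 0 := by
      rw [pdf_def, h0]; exact Measure.rnDeriv_zero volume
    have hf0 : (fun x => f x) =ᵐ[volume] 0 := (hpdf.symm.trans hz :)
    have : ∫⁻ x, f x = 0 := by
      rw [lintegral_congr_ae hf0]; simp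
    rw [htot] at this
    exact one_ne_zero this
  -- map = withDensity f
  have hmap : Measure.map σ2 ℙ = volume.withDensity f := by
    have hpm : IsProbabilityMeasure (Measure.map σ2 ℙ) :=
      Measure.isProbabilityMeasure_map haem
    have hdec := Measure.haveLebesgueDecomposition_add (Measure.map σ2 ℙ) volume
    have hwd : volume.withDensity ((Measure.map σ2 ℙ).rnDeriv volume)
        = volume.withDensity f := withDensity_congr_ae hpdf
    have huniv : volume.withDensity f univ = 1 := by
      rw [withDensity_apply _ MeasurableSet.univ, setLIntegral_univ, htot]
    have hsing : (Measure.map σ2 ℙ).singularPart volume = 0 := by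
      rw [← Measure.measure_univ_eq_zero]
      have h1 : (Measure.map σ2 ℙ) univ = 1 := measure_univ
      have h2 := congrArg (fun μ : Measure ℝ => μ univ) hdec
      simp only [Measure.add_apply] at h2
      rw [hwd, huniv, h1] at h2
      have h3 : (Measure.map σ2 ℙ).singularPart volume univ + 1 ≤ 0 + 1 := by
        rw [← h2, zero_add]
      exact le_antisymm ((ENNReal.add_le_add_iff_right (by norm_num)).mp h3)
        zero_le
    calc Measure.map σ2 ℙ
        = (Measure.map σ2 ℙ).singularPart volume
          + volume.withDensity ((Measure.map σ2 ℙ).rnDeriv volume) := hdec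
      _ = volume.withDensity f := by rw [hsing, hwd, zero_add]
  constructor
  · intro Γ hΓ
    obtain ⟨hΓ1, hΓ2⟩ := hΓ
    have hc1 : a ≤ Γ - Δ₁ := by linarith [hΔ.le]
    have hc2 : Γ - Δ₁ ≤ b := by linarith
    have hc3 : a ≤ Γ - Δ₂ := by linarith
    have hc4 : Γ - Δ₂ ≤ b := by linarith [hΔ.le]
    have hpos2 : 0 < Γ - Δ₂ := lt_of_lt_of_le ha hc3
    have hpos1 : 0 < Γ - Δ₁ := by linarith
    have h1 : ℙ {ω | Δ₁ + σ2 ω ≥ Γ}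
        = ENNReal.ofReal ((Real.log b - Real.log (Γ - Δ₁)) / (2 * L)) := by
      have hset : {ω | Δ₁ + σ2 ω ≥ Γ} = σ2 ⁻¹' Ici (Γ - Δ₁) := by
        ext ω
        simp only [mem_setOf_eq, mem_preimage, mem_Ici, ge_iff_le]
        constructor <;> intro h <;> linarith
      have hseteq : Icc a b ∩ Ici (Γ - Δ₁) = Icc (Γ - Δ₁) b := by
        ext x
        simp only [mem_inter_iff, mem_Icc, mem_Ici]
        constructor
        · rintro ⟨⟨_, hx2⟩, hx3⟩; exact ⟨hx3, hx2⟩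
        · rintro ⟨hx1, hx2⟩; exact ⟨⟨hc1.trans hx1, hx2⟩, hx1⟩
      rw [hset, ← Measure.map_apply_of_aemeasurable haem measurableSet_Ici,
        hmap, withDensity_apply _ measurableSet_Ici, hfdef,
        lintegral_indicator measurableSet_Icc,
        Measure.restrict_restrict measurableSet_Icc, hseteq,
        lint_aux hL hpos1 hc2]
    have h2 : ℙ {ω | Δ₂ + σ2 ω ≤ Γ}
        = ENNReal.ofReal ((Real.log (Γ - Δ₂) - Real.log a) / (2 * L)) := by
      have hset : {ω | Δ₂ + σ2 ω ≤ Γ} = σ2 ⁻¹' Iic (Γ - Δ₂) := by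
        ext ω
        simp only [mem_setOf_eq, mem_preimage, mem_Iic]
        constructor <;> intro h <;> linarith
      have hseteq : Icc a b ∩ Iic (Γ - Δ₂) = Icc a (Γ - Δ₂) := by
        ext x
        simp only [mem_inter_iff, mem_Icc, mem_Iic]
        constructor
        · rintro ⟨⟨hx1, _⟩, hx3⟩; exact ⟨hx1, hx3⟩
        · rintro ⟨hx1, hx2⟩; exact ⟨⟨hx1, hx2.trans hc4⟩, hx2⟩
      rw [hset, ← Measure.map_apply_of_aemeasurable haem measurableSet_Iic,
        hmap, withDensity_apply _ measurableSet_Iic, hfdef,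
        lintegral_indicator measurableSet_Icc,
        Measure.restrict_restrict measurableSet_Icc, hseteq,
        lint_aux hL ha hc3]
    rw [h1, h2, ← ENNReal.ofReal_add
        (by apply div_nonneg _ (by positivity); linarith [Real.log_le_log hpos1 hc2])
        (by apply div_nonneg _ (by positivity); linarith [Real.log_le_log ha hc3])]
    congr 1
    have harg : ϱ ^ 2 - ϱ ^ 2 * (Δ₂ - Δ₁) / (Γ - Δ₁) = ϱ ^ 2 * (Γ - Δ₂) / (Γ - Δ₁) := by
      field_simp
      ring
    rw [harg, Real.log_div (by positivity) hpos1.ne',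
      Real.log_mul (by positivity) hpos2.ne', Real.log_pow]
    have hcomb : Real.log b - Real.log (Γ - Δ₁) + (Real.log (Γ - Δ₂) - Real.log a)
        = 2 * L + Real.log (Γ - Δ₂) - Real.log (Γ - Δ₁) := by linarith [hlogba]
    rw [← add_div, hcomb]
    push_cast
    ring
  · intro x hx y hy hxy
    simp only [mem_Icc] at hx hy
    have hx2 : 0 < x - Δ₂ := by linarith [ha]
    have hx1 : 0 < x - Δ₁ := by linarith
    have hy1 : 0 < y - Δ₁ := by linarith [ha, hΔ.le]
    have hargx : ϱ ^ 2 - ϱ ^ 2 * (Δ₂ - Δ₁) / (x - Δ₁) = ϱ ^ 2 * (x - Δ₂) / (x - Δ₁) := by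
      field_simp; ring
    have hgx : 0 < ϱ ^ 2 - ϱ ^ 2 * (Δ₂ - Δ₁) / (x - Δ₁) := by
      rw [hargx]; positivity
    have hnum : 0 ≤ ϱ ^ 2 * (Δ₂ - Δ₁) := mul_nonneg (by positivity) (by linarith)
    have hdivle : ϱ ^ 2 * (Δ₂ - Δ₁) / (y - Δ₁) ≤ ϱ ^ 2 * (Δ₂ - Δ₁) / (x - Δ₁) := by
      gcongr
    have hle : ϱ ^ 2 - ϱ ^ 2 * (Δ₂ - Δ₁) / (x - Δ₁)
        ≤ ϱ ^ 2 - ϱ ^ 2 * (Δ₂ - Δ₁) / (y - Δ₁) := by linarith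
    exact mul_le_mul_of_nonneg_left (Real.log_le_log hgx hle) (by positivity)
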